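/- Let g be a unitary automorphism of a hermitian space (V, h) over (E, σ), and let W ⊆ V be a g-invariant totally isotropic subspace (W ⊆ W^⊥). Then W^⊥ is g-invariant, and: (i) the characteristic polynomial of g on V factors as the product of the characteristic polynomials of the maps induced by g on W, on W^⊥/W, and on V/W^⊥; (ii) h induces a well-defined nondegenerate hermitian form on W^⊥/W for which the induced automorphism is unitary, and the characteristic polynomial Q of g on W^⊥/W satisfies Q = Q*; (iii) the characteristic polynomial of g on V/W^⊥ equals (the characteristic polynomial of g on W)*. -/

import Mathlib

open scoped Classical

/-- `P*`: for monic `P` with nonzero constant term `b_d`, `P*(T) = σ(b_d)⁻¹ T^d P^σ(T⁻¹)`. -/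
noncomputable def pstar {k : Type*} [Field k] (σ : k →+* k) (P : Polynomial k) : Polynomial k :=
  Polynomial.C (σ (P.coeff 0))⁻¹ * (P.map σ).reverse

/-- The perpendicular `W^⊥ = {x : h(x, W) = 0}` of a subspace w.r.t. a sesquilinear form. -/
def perp {k V : Type*} [Field k] [AddCommGroup V] [Module k V] {σ : k →+* k}
    (B : V →ₗ[k] V →ₛₗ[σ] k) (W : Submodule k V) : Submodule k V where
  carrier := {x | ∀ w ∈ W, B x w = 0}
  add_mem' := by
    intro x y hx hy w hw
    simp [map_add, hx w hw, hy w hw]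
  zero_mem' := by
    intro w hw
    simp
  smul_mem' := by
    intro c x hx w hw
    simp [map_smul, hx w hw]

/-- The endomorphism induced on the subquotient `P/W` by an endomorphism `f` leaving
`P` and `W` invariant (junk value `0` otherwise). -/
noncomputable def inducedMap {k V : Type*} [Field k] [AddCommGroup V] [Module k V]
    (f : V →ₗ[k] V) (W P : Submodule k V) :
    (↥P ⧸ (Submodule.comap P.subtype W)) →ₗ[k] (↥P ⧸ (Submodule.comap P.subtype W)) :=
  if hf : (∀ x ∈ P, f x ∈ P) ∧ (∀ x ∈ W, f x ∈ W) then
    Submodule.mapQ _ _ (f.restrict hf.1) (by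
      intro x hx
      simp only [Submodule.mem_comap, LinearMap.restrict_apply, Submodule.subtype_apply] at hx ⊢
      exact hf.2 _ hx)
  else 0

/-- The restriction of an endomorphism `f` to an invariant subspace `W`
(junk value `0` otherwise). -/
noncomputable def restrictMap {k V : Type*} [Field k] [AddCommGroup V] [Module k V]
    (f : V →ₗ[k] V) (W : Submodule k V) : ↥W →ₗ[k] ↥W :=
  if hf : ∀ x ∈ W, f x ∈ W then f.restrict hf else 0

/-- The endomorphism induced on the quotient `V/W` by an endomorphism `f` leaving `W`
invariant (junk value `0` otherwise). -/
noncomputable def quotMap {k V : Type*} [Field k] [AddCommGroup V] [Module k V]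
    (f : V →ₗ[k] V) (W : Submodule k V) : (V ⧸ W) →ₗ[k] (V ⧸ W) :=
  if hf : W ≤ W.comap f then Submodule.mapQ W W f hf else 0

/-! ### Auxiliary matrix lemmas -/

section MatrixLemmas

open Polynomial Matrix

variable {E : Type*} [Field E] {m : Type*} [Fintype m] [DecidableEq m]

omit [Fintype m] in
lemma aux_diagX_eq :
    (diagonal fun _ : m => (X : E[X])) = (X : E[X]) • (1 : Matrix m m E[X]) := by
  ext i j
  rcases eq_or_ne i j with rfl | hij
  · simp
  · simp [diagonal_apply, one_apply, hij]

lemma aux_charpoly_transpose (A : Matrix m m E) : Aᵀ.charpoly = A.charpoly := by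
  unfold Matrix.charpoly charmatrix
  simp only [RingHom.mapMatrix_apply]
  rw [← Matrix.det_transpose (scalar m (X : E[X]) - A.map C)]
  congr 1
  rw [Matrix.transpose_sub, Matrix.transpose_map]
  congr 1
  simp [Matrix.scalar_apply, Matrix.diagonal_transpose]

lemma aux_charpoly_conj (A G : Matrix m m E) (hG : IsUnit G.det) :
    (G⁻¹ * A * G).charpoly = A.charpoly := by
  unfold Matrix.charpoly
  have h1 : (G.map C) * (G⁻¹.map C) = 1 := by
    rw [← Matrix.map_mul, Matrix.mul_nonsing_inv _ hG]; simp
  have h2 : (G⁻¹.map C) * (G.map C) = 1 := by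
    rw [← Matrix.map_mul, Matrix.nonsing_inv_mul _ hG]; simp
  have key : charmatrix (G⁻¹ * A * G) = (G⁻¹.map C) * charmatrix A * (G.map C) := by
    unfold charmatrix
    simp only [RingHom.mapMatrix_apply]
    rw [Matrix.mul_sub, Matrix.sub_mul]
    congr 1
    · rw [scalar_apply, aux_diagX_eq, Matrix.mul_smul, Matrix.mul_one, Matrix.smul_mul, h2]
    · simp [Matrix.map_mul, Matrix.mul_assoc]
  rw [key, Matrix.det_mul, Matrix.det_mul, mul_comm, ← mul_assoc, ← Matrix.det_mul, h1]
  simp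

lemma aux_charpoly_inv (A : Matrix m m E) (hA : IsUnit A.det) :
    A⁻¹.charpoly = C ((A.charpoly.coeff 0)⁻¹) * A.charpoly.reverse := by
  have key : charmatrix A⁻¹ = (A⁻¹.map C) * ((X : E[X]) • A.map C - 1) := by
    unfold charmatrix
    simp only [RingHom.mapMatrix_apply]
    rw [Matrix.mul_sub, Matrix.mul_one, Matrix.mul_smul, ← Matrix.map_mul,
      Matrix.nonsing_inv_mul _ hA]
    congr 1
    rw [scalar_apply, aux_diagX_eq]
    simp
  have h0 : A.charpoly.coeff 0 = (-1) ^ Fintype.card m * A.det := by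
    rw [Matrix.det_eq_sign_charpoly_coeff, ← mul_assoc, ← mul_pow]; simp
  have hd : ((X : E[X]) • A.map C - 1).det = (-1) ^ Fintype.card m * A.charpolyRev := by
    rw [Matrix.charpolyRev, ← Matrix.det_neg, neg_sub]
  have hdet : A⁻¹.det = (A.det)⁻¹ := by
    rw [Matrix.det_nonsing_inv, Ring.inverse_eq_inv']
  rw [Matrix.charpoly, key, Matrix.det_mul, ← RingHom.mapMatrix_apply, ← RingHom.map_det, hd,
    ← Matrix.reverse_charpoly, hdet, h0, mul_inv, ← inv_pow, inv_neg, inv_one,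
    _root_.map_mul, map_pow, map_neg, _root_.map_one]
  ring

lemma aux_map_reverse (σ : E →+* E) (p : E[X]) : p.reverse.map σ = (p.map σ).reverse := by
  unfold Polynomial.reverse
  rw [← Polynomial.reflect_map, Polynomial.natDegree_map]

end MatrixLemmas

/-! ### The pairing lemma -/

section Pairing

open Polynomial Matrix Module

/-- If a perfect `σ`-sesquilinear pairing intertwines `f` and `f'`, then the characteristic
polynomial of `f'` is `pstar σ` of that of `f`. -/
lemma pairing_charpoly {E : Type*} [Field E] (σ : E →+* E) (hσ : ∀ x, σ (σ x) = x)
    {M N : Type*} [AddCommGroup M] [Module E M] [FiniteDimensional E M]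
    [AddCommGroup N] [Module E N] [FiniteDimensional E N]
    (P : M →ₗ[E] N →ₛₗ[σ] E)
    (hdim : finrank E M = finrank E N)
    (hl : ∀ x : M, (∀ y, P x y = 0) → x = 0)
    (f : M →ₗ[E] M) (f' : N →ₗ[E] N)
    (hc : ∀ x y, P (f x) (f' y) = P x y) :
    LinearMap.charpoly f' = pstar σ (LinearMap.charpoly f) := by
  classical
  set b : Basis (Fin (finrank E M)) E M := finBasis E M with hb
  set c : Basis (Fin (finrank E M)) E N :=
    (finBasis E N).reindex (finCongr hdim.symm) with hcb
  set G : Matrix (Fin (finrank E M)) (Fin (finrank E M)) E :=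
    Matrix.of (fun i j => P (b i) (c j)) with hG
  have expand : ∀ (x : M) (y : N),
      P x y = ∑ i, ∑ j, b.repr x i * (σ (c.repr y j) * G i j) := by
    intro x y
    conv_lhs => rw [← b.sum_repr x, ← c.sum_repr y]
    rw [map_sum, Finset.sum_comm (f := fun i j => b.repr x i * (σ (c.repr y j) * G i j))]
    refine Finset.sum_congr rfl fun j _ => ?_
    rw [LinearMap.map_smulₛₗ, smul_eq_mul, map_sum, LinearMap.sum_apply, Finset.mul_sum]
    refine Finset.sum_congr rfl fun i _ => ?_
    rw [_root_.map_smul, LinearMap.smul_apply, smul_eq_mul]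
    have hGij : G i j = P (b i) (c j) := rfl
    rw [hGij]
    ring
  have hGu : IsUnit G.det := by
    rw [isUnit_iff_ne_zero]
    intro hdet
    obtain ⟨v, hv0, hvG⟩ := Matrix.exists_vecMul_eq_zero_iff.mpr hdet
    set x : M := ∑ i, v i • b i with hx
    have hcols : ∀ j, P x (c j) = 0 := by
      intro j
      have : P x (c j) = ∑ i, v i * G i j := by
        rw [hx, map_sum, LinearMap.sum_apply]
        refine Finset.sum_congr rfl fun i _ => ?_
        rw [_root_.map_smul, LinearMap.smul_apply, smul_eq_mul]
        rfl
      rw [this]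
      have := congrFun hvG j
      simpa [Matrix.vecMul, dotProduct] using this
    have hx0 : x = 0 := by
      refine hl x fun y => ?_
      conv_lhs => rw [← c.sum_repr y]
      rw [map_sum]
      refine Finset.sum_eq_zero fun j _ => ?_
      rw [LinearMap.map_smulₛₗ, hcols j, smul_zero]
    have hli := Fintype.linearIndependent_iff.mp b.linearIndependent
    exact hv0 (funext (hli v (by rw [← hx, hx0])))
  set A := LinearMap.toMatrix b b f with hA
  set A' := LinearMap.toMatrix c c f' with hA'
  have key : Aᵀ * G * A'.map σ = G := by
    ext i j
    have h1 := hc (b i) (c j)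
    rw [expand (f (b i)) (f' (c j))] at h1
    have hG2 : G i j = P (b i) (c j) := rfl
    rw [← hG2] at h1
    rw [← h1]
    calc (Aᵀ * G * A'.map σ) i j
        = ∑ l, (∑ k, A k i * G k l) * σ (A' l j) := by
          rw [Matrix.mul_apply]
          refine Finset.sum_congr rfl fun l _ => ?_
          rw [Matrix.mul_apply]
          rfl
      _ = ∑ l, ∑ k, A k i * G k l * σ (A' l j) := by
          refine Finset.sum_congr rfl fun l _ => ?_
          rw [Finset.sum_mul]
      _ = ∑ k, ∑ l, A k i * G k l * σ (A' l j) := Finset.sum_comm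
      _ = ∑ k, ∑ l, b.repr (f (b i)) k * (σ (c.repr (f' (c j)) l) * G k l) := by
          refine Finset.sum_congr rfl fun k _ => Finset.sum_congr rfl fun l _ => ?_
          rw [hA, hA', LinearMap.toMatrix_apply, LinearMap.toMatrix_apply]
          ring
  have hGd0 : G.det ≠ 0 := hGu.ne_zero
  have hdetmul : Aᵀ.det * G.det * (A'.map σ).det = G.det := by
    rw [← Matrix.det_mul, ← Matrix.det_mul, key]
  have h3 : Aᵀ.det * (A'.map σ).det = 1 := by
    apply mul_right_cancel₀ hGd0
    rw [one_mul]
    linear_combination hdetmul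
  have hAT : IsUnit Aᵀ.det := IsUnit.of_mul_eq_one _ h3
  have hAu : IsUnit A.det := by rwa [Matrix.det_transpose] at hAT
  have e1 : Aᵀ * (G * A'.map σ) = G := by rw [← Matrix.mul_assoc]; exact key
  have e2 : G * A'.map σ = Aᵀ⁻¹ * G := by
    conv_rhs => rw [← e1]
    rw [← Matrix.mul_assoc, Matrix.nonsing_inv_mul _ hAT, Matrix.one_mul]
  have e3 : A'.map σ = G⁻¹ * Aᵀ⁻¹ * G := by
    rw [Matrix.mul_assoc, ← e2, ← Matrix.mul_assoc, Matrix.nonsing_inv_mul _ hGu, Matrix.one_mul]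
  have c1 : (A'.map σ).charpoly = (A⁻¹).charpoly := by
    rw [e3, aux_charpoly_conj _ _ hGu, ← Matrix.transpose_nonsing_inv, aux_charpoly_transpose]
  have c2 : A'.charpoly.map σ = (A⁻¹).charpoly := by rw [← Matrix.charpoly_map, c1]
  have c3 : A'.charpoly = ((A⁻¹).charpoly).map σ := by
    have h4 := congrArg (Polynomial.map σ) c2
    rwa [Polynomial.map_map, show σ.comp σ = RingHom.id E from RingHom.ext hσ,
      Polynomial.map_id] at h4
  rw [aux_charpoly_inv A hAu] at c3
  have hfA : A.charpoly = f.charpoly := LinearMap.charpoly_toMatrix f b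
  have hfA' : A'.charpoly = f'.charpoly := LinearMap.charpoly_toMatrix f' c
  rw [← hfA', c3]
  unfold pstar
  rw [← hfA, Polynomial.map_mul, Polynomial.map_C, map_inv₀, aux_map_reverse]

end Pairing

/-! ### Characteristic polynomial of an invariant subspace factorization -/

section Factorization

open Module Polynomial

variable {E V : Type*} [Field E] [AddCommGroup V] [Module E V] [FiniteDimensional E V]

lemma charpoly_restrict_mul_mapQ (f : V →ₗ[E] V) (U : Submodule E V)
    (hf : ∀ x ∈ U, f x ∈ U) :
    f.charpoly = (f.restrict hf).charpoly *
      (Submodule.mapQ U U f (fun x hx => hf x hx)).charpoly := by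
  classical
  obtain ⟨Cc, hC⟩ := Submodule.exists_isCompl U
  set e := Submodule.prodEquivOfIsCompl U Cc hC with he
  set bU := finBasis E U
  set bC := finBasis E Cc
  set bb := bU.prod bC with hbb
  set q0 := Submodule.quotientEquivOfIsCompl U Cc hC with hq0
  set fU := f.restrict hf with hfU
  set fQ := Submodule.mapQ U U f (fun x hx => hf x hx) with hfQ
  set projU := U.linearProjOfIsCompl Cc hC with hprojU
  set projC := Cc.linearProjOfIsCompl U hC.symm with hprojC
  set fC : Cc →ₗ[E] Cc := projC ∘ₗ f ∘ₗ Cc.subtype with hfC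
  set t : Cc →ₗ[E] U := projU ∘ₗ f ∘ₗ Cc.subtype with ht
  have hsum : ∀ v : V, (projU v : V) + (projC v : V) = v := fun v =>
    Submodule.projection_add_projection_eq_self hC v
  have hesymm : ∀ x : V, e.symm x = (projU x, projC x) := by
    intro x
    apply e.injective
    rw [e.apply_symm_apply]
    show x = (projU x : V) + (projC x : V)
    exact (hsum x).symm
  have hq0mk : ∀ v : V, q0 (Submodule.Quotient.mk v) = projC v := by
    intro v
    apply q0.symm.injective
    rw [q0.symm_apply_apply, hq0, Submodule.quotientEquivOfIsCompl_symm_apply]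
    rw [Submodule.Quotient.eq]
    have h2 : v - (projC v : V) = (projU v : V) := by
      rw [sub_eq_iff_eq_add]
      exact (hsum v).symm
    rw [h2]
    exact (projU v).2
  have hconj : fC = (q0.conj : _ ≃ₗ[E] _) fQ := by
    ext c
    rw [LinearEquiv.conj_apply]
    simp only [LinearMap.coe_comp, Function.comp_apply, LinearEquiv.coe_coe]
    rw [hq0, Submodule.quotientEquivOfIsCompl_symm_apply, ← hq0]
    rw [hfQ, Submodule.mapQ_apply, hq0mk]
    rfl
  have hFl : ∀ j, (e.symm.conj f) (bb (Sum.inl j)) = (fU (bU j), 0) := by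
    intro j
    rw [LinearEquiv.conj_apply]
    simp only [LinearMap.coe_comp, Function.comp_apply, LinearEquiv.coe_coe,
      LinearEquiv.symm_symm]
    have h1 : e (bb (Sum.inl j)) = (bU j : V) := by
      simp [hbb, Basis.prod_apply, he]
    rw [h1, hesymm]
    have h2 : f (bU j : V) = ((fU (bU j) : U) : V) := rfl
    rw [h2]
    refine Prod.ext ?_ ?_
    · exact Submodule.linearProjOfIsCompl_apply_left hC _
    · exact Submodule.linearProjOfIsCompl_apply_right hC.symm _
  have hFr : ∀ j, (e.symm.conj f) (bb (Sum.inr j)) = (t (bC j), fC (bC j)) := by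
    intro j
    rw [LinearEquiv.conj_apply]
    simp only [LinearMap.coe_comp, Function.comp_apply, LinearEquiv.coe_coe,
      LinearEquiv.symm_symm]
    have h1 : e (bb (Sum.inr j)) = (bC j : V) := by
      simp [hbb, Basis.prod_apply, he]
    rw [h1, hesymm]
    rfl
  have hmat : LinearMap.toMatrix bb bb (e.symm.conj f) =
      Matrix.fromBlocks (LinearMap.toMatrix bU bU fU) (LinearMap.toMatrix bC bU t)
        0 (LinearMap.toMatrix bC bC fC) := by
    ext (i | i) (j | j)
    · rw [LinearMap.toMatrix_apply, hFl j]
      simp [hbb, LinearMap.toMatrix_apply]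
    · rw [LinearMap.toMatrix_apply, hFr j]
      simp [hbb, LinearMap.toMatrix_apply]
    · rw [LinearMap.toMatrix_apply, hFl j]
      simp [hbb]
    · rw [LinearMap.toMatrix_apply, hFr j]
      simp [hbb, LinearMap.toMatrix_apply]
  have hstep : f.charpoly = (e.symm.conj f).charpoly := (e.symm.charpoly_conj f).symm
  rw [hstep, ← LinearMap.charpoly_toMatrix (e.symm.conj f) bb, hmat,
    Matrix.charpoly_fromBlocks_zero₂₁, LinearMap.charpoly_toMatrix, LinearMap.charpoly_toMatrix,
    hconj, LinearEquiv.charpoly_conj]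

end Factorization

/-! ### Perp dimension formula -/

section Perp

open Module

variable {E : Type*} [Field E] {σ : E →+* E}
variable {V : Type*} [AddCommGroup V] [Module E V] [FiniteDimensional E V]

lemma mem_perp_iff (B : V →ₗ[E] V →ₛₗ[σ] E) (W : Submodule E V) (x : V) :
    x ∈ perp B W ↔ ∀ w ∈ W, B x w = 0 := Iff.rfl

lemma finrank_perp_add (hσ : ∀ x, σ (σ x) = x) (B : V →ₗ[E] V →ₛₗ[σ] E)
    (h_herm : ∀ x y : V, B y x = σ (B x y))
    (h_nondeg : ∀ x : V, (∀ y : V, B x y = 0) → x = 0)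
    (U : Submodule E V) :
    finrank E U + finrank E (perp B U) = finrank E V := by
  classical
  set u := finBasis E U with hu
  set Ψ : V →ₗ[E] (Fin (finrank E U) → E) :=
    LinearMap.pi (fun j => {
      toFun := fun x => B x (u j)
      map_add' := by intro a b; simp
      map_smul' := by intro a b; simp }) with hΨ
  have hΨapp : ∀ (x : V) (j : Fin (finrank E U)), Ψ x j = B x (u j) := fun x j => rfl
  have hker : LinearMap.ker Ψ = perp B U := by
    ext x
    rw [LinearMap.mem_ker, mem_perp_iff]
    constructor
    · intro h w hw
      have hx : ∀ j, B x (u j) = 0 := by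
        intro j
        have := congrFun (congrArg (fun f => (f : Fin _ → E)) h) j
        simpa [hΨapp] using this
      have hrepr : (⟨w, hw⟩ : U) = ∑ j, u.repr ⟨w, hw⟩ j • u j := (u.sum_repr ⟨w, hw⟩).symm
      have hw2 : w = ∑ j, u.repr ⟨w, hw⟩ j • (u j : V) := by
        have := congrArg Subtype.val hrepr
        refine this.trans ?_
        rw [Submodule.coe_sum]
        simp only [Submodule.coe_smul]
      rw [hw2, map_sum]
      exact Finset.sum_eq_zero fun j _ => by
        rw [LinearMap.map_smulₛₗ, hx j, smul_zero]
    · intro h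
      ext j
      simpa [hΨapp] using h (u j) (u j).2
  have hrange : LinearMap.range Ψ = ⊤ := by
    by_contra h
    obtain ⟨φ, hφ0, hφ⟩ := Submodule.exists_dual_map_eq_bot_of_lt_top
      (lt_top_iff_ne_top.mpr h) inferInstance
    have hφΨ : ∀ x : V, φ (Ψ x) = 0 := by
      intro x
      have : φ (Ψ x) ∈ (LinearMap.range Ψ).map φ := ⟨Ψ x, ⟨x, rfl⟩, rfl⟩
      rw [hφ] at this
      exact this
    set c : Fin (finrank E U) → E := fun j => φ (Pi.single j 1) with hc
    have hφw : ∀ w : Fin (finrank E U) → E, φ w = ∑ j, w j * c j := by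
      intro w
      conv_lhs => rw [show w = ∑ j, Pi.single j (w j) from (Finset.univ_sum_single w).symm]
      rw [map_sum]
      refine Finset.sum_congr rfl fun j _ => ?_
      have h6 : Pi.single j (w j)
          = w j • (Pi.single j (1 : E) : Fin (finrank E U) → E) := by
        ext k
        rcases eq_or_ne k j with rfl | hk
        · simp
        · simp [Pi.single_apply, hk]
      rw [h6, map_smul, smul_eq_mul]
    set yU : U := ∑ j, σ (c j) • u j with hyU
    have hBy : ∀ x : V, B x (yU : V) = 0 := by
      intro x
      have hcoe : ((yU : U) : V) = ∑ j, σ (c j) • (u j : V) := by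
        rw [hyU]; simp
      rw [hcoe, map_sum]
      have : ∀ j ∈ Finset.univ, B x (σ (c j) • (u j : V)) = c j * B x (u j) := by
        intro j _
        rw [LinearMap.map_smulₛₗ, hσ, smul_eq_mul]
      rw [Finset.sum_congr rfl this,
        Finset.sum_congr rfl (fun j (_ : j ∈ Finset.univ) => mul_comm (c j) (B x (u j)))]
      have h5 := hφΨ x
      rw [hφw (Ψ x)] at h5
      exact h5
    have hy0 : (yU : V) = 0 := by
      apply h_nondeg
      intro t
      rw [h_herm t (yU : V), hBy t, map_zero]
    have hyU0 : yU = 0 := by exact_mod_cast hy0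
    have hli := Fintype.linearIndependent_iff.mp u.linearIndependent
    have hcj : ∀ j, σ (c j) = 0 := hli _ (by rw [← hyU0])
    have hc0 : ∀ j, c j = 0 := by
      intro j
      have := hcj j
      rw [show (0 : E) = σ 0 from (map_zero σ).symm] at this
      exact σ.injective this
    exact hφ0 (LinearMap.ext fun w => by rw [hφw]; simp [hc0])
  have hrk := LinearMap.finrank_range_add_finrank_ker Ψ
  rw [hrange, finrank_top, hker] at hrk
  have hpi : finrank E (Fin (finrank E U) → E) = finrank E U := by
    simp [Module.finrank_fin_fun]
  rw [hpi] at hrk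
  omega

end Perp

/-! ### Sesquilinear forms on subquotients -/

section Forms

variable {E : Type*} [Field E] {σ : E →+* E}
variable {V : Type*} [AddCommGroup V] [Module E V]
variable (B : V →ₗ[E] V →ₛₗ[σ] E)

/-- The restriction of the partial application of `B` to a submodule. -/
def innerForm (P : Submodule E V) (x : V) : ↥P →ₛₗ[σ] E where
  toFun y := B x y
  map_add' := by intro a b; simp
  map_smul' := by intro a b; simp

/-- The form induced by `B` on a subquotient `P/W`. -/
noncomputable def subquotForm (W P : Submodule E V)
    (h1 : ∀ x ∈ P, ∀ w ∈ W, B x w = 0)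
    (h2 : ∀ w ∈ W, ∀ y ∈ P, B w y = 0) :
    (↥P ⧸ (Submodule.comap P.subtype W)) →ₗ[E]
      (↥P ⧸ (Submodule.comap P.subtype W)) →ₛₗ[σ] E :=
  Submodule.liftQ _
    { toFun := fun x => Submodule.liftQ _ (innerForm B P (x : V)) (by
        intro w hw
        rw [LinearMap.mem_ker]
        exact h1 (x : V) x.2 (w : V) hw)
      map_add' := by
        intro a b
        apply LinearMap.ext
        intro z
        obtain ⟨y, rfl⟩ := Submodule.Quotient.mk_surjective _ z
        simp [Submodule.liftQ_apply, innerForm]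
      map_smul' := by
        intro r a
        apply LinearMap.ext
        intro z
        obtain ⟨y, rfl⟩ := Submodule.Quotient.mk_surjective _ z
        simp [Submodule.liftQ_apply, innerForm] }
    (by
      intro w hw
      rw [LinearMap.mem_ker]
      apply LinearMap.ext
      intro z
      obtain ⟨y, rfl⟩ := Submodule.Quotient.mk_surjective _ z
      simp only [LinearMap.coe_mk, AddHom.coe_mk, Submodule.liftQ_apply, LinearMap.zero_apply]
      exact h2 (w : V) hw (y : V) y.2)

lemma subquotForm_apply (W P : Submodule E V)
    (h1 : ∀ x ∈ P, ∀ w ∈ W, B x w = 0)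
    (h2 : ∀ w ∈ W, ∀ y ∈ P, B w y = 0) (x y : ↥P) :
    subquotForm B W P h1 h2 (Submodule.Quotient.mk x) (Submodule.Quotient.mk y)
      = B (x : V) (y : V) := by
  unfold subquotForm
  simp [Submodule.liftQ_apply, innerForm]

/-- The pairing between `W` and `V/P` induced by `B`. -/
noncomputable def quotForm (W P : Submodule E V)
    (h2 : ∀ w ∈ W, ∀ y ∈ P, B w y = 0) :
    ↥W →ₗ[E] (V ⧸ P) →ₛₗ[σ] E where
  toFun w := Submodule.liftQ P (B (w : V)) (by
    intro y hy
    rw [LinearMap.mem_ker]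
    exact h2 (w : V) w.2 y hy)
  map_add' := by
    intro a b
    apply LinearMap.ext
    intro z
    obtain ⟨y, rfl⟩ := Submodule.Quotient.mk_surjective _ z
    simp [Submodule.liftQ_apply]
  map_smul' := by
    intro r a
    apply LinearMap.ext
    intro z
    obtain ⟨y, rfl⟩ := Submodule.Quotient.mk_surjective _ z
    simp [Submodule.liftQ_apply]

lemma quotForm_apply (W P : Submodule E V)
    (h2 : ∀ w ∈ W, ∀ y ∈ P, B w y = 0) (w : ↥W) (y : V) :
    quotForm B W P h2 w (Submodule.Quotient.mk y) = B (w : V) y := by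
  unfold quotForm
  simp [Submodule.liftQ_apply]

end Forms

/-! ### Main theorem -/

open Module

/-- Let `g` be a unitary automorphism of a hermitian space `(V, h)` over `(E, σ)`
and `W` a `g`-invariant totally isotropic subspace. Then `W^⊥` is `g`-invariant, and:
(i) `charpoly(g on V) = charpoly(g on W)·charpoly(g on W^⊥/W)·charpoly(g on V/W^⊥)`;
(ii) `h` induces a nondegenerate hermitian form on `W^⊥/W` for which the induced automorphism
is unitary, and the characteristic polynomial `Q` of `g` on `W^⊥/W` satisfies `Q = Q*`;
(iii) `charpoly(g on V/W^⊥) = (charpoly(g on W))*`. -/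
theorem stmt12 {E : Type*} [Field E] (σ : E →+* E) (hσ : ∀ x, σ (σ x) = x)
    {V : Type*} [AddCommGroup V] [Module E V] [FiniteDimensional E V]
    (B : V →ₗ[E] V →ₛₗ[σ] E)
    (h_herm : ∀ x y : V, B y x = σ (B x y))
    (h_nondeg : ∀ x : V, (∀ y : V, B x y = 0) → x = 0)
    (g : V ≃ₗ[E] V) (hg : ∀ x y : V, B (g x) (g y) = B x y)
    (W : Submodule E V)
    (hWg : Submodule.map g.toLinearMap W ≤ W)
    (hWiso : W ≤ perp B W) :
    Submodule.map g.toLinearMap (perp B W) ≤ perp B W ∧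
    LinearMap.charpoly g.toLinearMap
      = LinearMap.charpoly (restrictMap g.toLinearMap W)
        * LinearMap.charpoly (inducedMap g.toLinearMap W (perp B W))
        * LinearMap.charpoly (quotMap g.toLinearMap (perp B W)) ∧
    (∃ B' : (↥(perp B W) ⧸ (Submodule.comap (perp B W).subtype W)) →ₗ[E]
        (↥(perp B W) ⧸ (Submodule.comap (perp B W).subtype W)) →ₛₗ[σ] E,
      (∀ x y : ↥(perp B W),
        B' (Submodule.Quotient.mk x) (Submodule.Quotient.mk y) = B (x : V) (y : V)) ∧
      (∀ u v, B' v u = σ (B' u v)) ∧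
      (∀ u, (∀ v, B' u v = 0) → u = 0) ∧
      (∀ u v, B' (inducedMap g.toLinearMap W (perp B W) u)
          (inducedMap g.toLinearMap W (perp B W) v) = B' u v)) ∧
    LinearMap.charpoly (inducedMap g.toLinearMap W (perp B W))
      = pstar σ (LinearMap.charpoly (inducedMap g.toLinearMap W (perp B W))) ∧
    LinearMap.charpoly (quotMap g.toLinearMap (perp B W))
      = pstar σ (LinearMap.charpoly (restrictMap g.toLinearMap W)) := by
  classical
  -- basic invariance facts
  have hWg' : ∀ x ∈ W, g.toLinearMap x ∈ W := fun x hx => hWg ⟨x, hx, rfl⟩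
  have hmapW : Submodule.map g.toLinearMap W = W := by
    apply Submodule.eq_of_le_of_finrank_le hWg
    rw [LinearEquiv.finrank_map_eq]
  have hginvW : ∀ w ∈ W, g.symm w ∈ W := by
    intro w hw
    rw [← hmapW] at hw
    obtain ⟨x, hx, rfl⟩ := hw
    simpa using hx
  have claim1 : Submodule.map g.toLinearMap (perp B W) ≤ perp B W := by
    rintro _ ⟨x, hx, rfl⟩
    intro w hw
    calc B (g.toLinearMap x) w = B (g x) (g (g.symm w)) := by rw [g.apply_symm_apply]; rfl
      _ = B x (g.symm w) := hg x (g.symm w)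
      _ = 0 := hx _ (hginvW w hw)
  have hPmg : ∀ x ∈ perp B W, g.toLinearMap x ∈ perp B W := fun x hx => claim1 ⟨x, hx, rfl⟩
  -- dimension facts
  have hrank1 := finrank_perp_add hσ B h_herm h_nondeg W
  have hrank2 := finrank_perp_add hσ B h_herm h_nondeg (perp B W)
  have hWlePerpPm : W ≤ perp B (perp B W) := by
    intro w hw y hy
    rw [h_herm y w, hy w hw, map_zero]
  have hdouble : perp B (perp B W) = W := by
    refine (Submodule.eq_of_le_of_finrank_le hWlePerpPm ?_).symm
    omega
  -- vanishing facts for the forms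
  have h1 : ∀ x ∈ perp B W, ∀ w ∈ W, B x w = 0 := fun x hx => hx
  have h2 : ∀ w ∈ W, ∀ y ∈ perp B W, B w y = 0 := fun w hw y hy => by
    rw [h_herm y w, hy w hw, map_zero]
  -- identifications of the junk-guarded maps
  have hleq : perp B W ≤ (perp B W).comap g.toLinearMap := fun x hx => hPmg x hx
  have hquot : quotMap g.toLinearMap (perp B W)
      = Submodule.mapQ (perp B W) (perp B W) g.toLinearMap hleq := by
    rw [quotMap, dif_pos hleq]
  set gP := g.toLinearMap.restrict hPmg with hgP
  set W' := Submodule.comap (perp B W).subtype W with hW'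
  have hgPW' : ∀ x ∈ W', gP x ∈ W' := by
    intro x hx
    simp only [hW', Submodule.mem_comap, Submodule.subtype_apply] at hx ⊢
    rw [hgP, LinearMap.restrict_coe_apply]
    exact hWg' _ hx
  have hind_eq : inducedMap g.toLinearMap W (perp B W)
      = Submodule.mapQ W' W' gP (fun x hx => hgPW' x hx) := by
    rw [inducedMap, dif_pos (And.intro hPmg hWg')]
  have hindmk : ∀ z : ↥(perp B W),
      inducedMap g.toLinearMap W (perp B W) (Submodule.Quotient.mk z)
        = Submodule.Quotient.mk (gP z) := by
    intro z
    rw [hind_eq, Submodule.mapQ_apply]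
  have hres_eq : restrictMap g.toLinearMap W = g.toLinearMap.restrict hWg' := by
    rw [restrictMap, dif_pos hWg']
  -- restrictMap is conjugate to the double restriction
  set ε := Submodule.comapSubtypeEquivOfLe hWiso with hε
  have hconjres : restrictMap g.toLinearMap W = (ε.conj : _ ≃ₗ[E] _) (gP.restrict hgPW') := by
    apply LinearMap.ext
    intro x
    apply Subtype.ext
    rw [hres_eq]
    have hsymm : ((ε.symm x : ↥(perp B W)) : V) = (x : V) := by
      rw [← Submodule.comapSubtypeEquivOfLe_apply_coe hWiso (ε.symm x), hε,
        ε.apply_symm_apply]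
    calc ((g.toLinearMap.restrict hWg' x : ↥W) : V) = g.toLinearMap (x : V) :=
          LinearMap.restrict_coe_apply _ _ _
      _ = ((ε.conj (gP.restrict hgPW') x : ↥W) : V) := by
          rw [LinearEquiv.conj_apply]
          simp only [LinearMap.coe_comp, Function.comp_apply, LinearEquiv.coe_coe]
          rw [hε, Submodule.comapSubtypeEquivOfLe_apply_coe]
          rw [LinearMap.restrict_coe_apply]
          rw [LinearMap.restrict_coe_apply]
          rw [← hε, hsymm]
          rfl
  -- Part (i)
  have part1 : LinearMap.charpoly g.toLinearMap
      = LinearMap.charpoly (restrictMap g.toLinearMap W)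
        * LinearMap.charpoly (inducedMap g.toLinearMap W (perp B W))
        * LinearMap.charpoly (quotMap g.toLinearMap (perp B W)) := by
    have step1 := charpoly_restrict_mul_mapQ g.toLinearMap (perp B W) hPmg
    have step2 := charpoly_restrict_mul_mapQ gP W' hgPW'
    rw [hquot, hind_eq, hconjres, LinearEquiv.charpoly_conj]
    rw [step1, ← hgP, step2]
  -- the induced form on the subquotient
  set B' := subquotForm B W (perp B W) h1 h2 with hB'
  have hB'mk : ∀ x y : ↥(perp B W),
      B' (Submodule.Quotient.mk x) (Submodule.Quotient.mk y) = B (x : V) (y : V) :=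
    fun x y => subquotForm_apply B W (perp B W) h1 h2 x y
  have hB'herm : ∀ u v, B' v u = σ (B' u v) := by
    intro u v
    obtain ⟨x, rfl⟩ := Submodule.Quotient.mk_surjective _ u
    obtain ⟨y, rfl⟩ := Submodule.Quotient.mk_surjective _ v
    rw [hB'mk, hB'mk]
    exact h_herm (x : V) (y : V)
  have hB'nondeg : ∀ u, (∀ v, B' u v = 0) → u = 0 := by
    intro u hu
    obtain ⟨x, rfl⟩ := Submodule.Quotient.mk_surjective _ u
    have hxW : (x : V) ∈ W := by
      have hxPP : (x : V) ∈ perp B (perp B W) := by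
        intro w hw
        have := hu (Submodule.Quotient.mk ⟨w, hw⟩)
        rwa [hB'mk] at this
      rwa [hdouble] at hxPP
    exact (Submodule.Quotient.mk_eq_zero _).mpr hxW
  have hB'unit : ∀ u v, B' (inducedMap g.toLinearMap W (perp B W) u)
      (inducedMap g.toLinearMap W (perp B W) v) = B' u v := by
    intro u v
    obtain ⟨x, rfl⟩ := Submodule.Quotient.mk_surjective _ u
    obtain ⟨y, rfl⟩ := Submodule.Quotient.mk_surjective _ v
    rw [hindmk, hindmk, hB'mk, hB'mk]
    rw [hgP, LinearMap.restrict_coe_apply, LinearMap.restrict_coe_apply]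
    exact hg (x : V) (y : V)
  -- Part (ii) second half
  have part4 : LinearMap.charpoly (inducedMap g.toLinearMap W (perp B W))
      = pstar σ (LinearMap.charpoly (inducedMap g.toLinearMap W (perp B W))) :=
    pairing_charpoly σ hσ B' rfl hB'nondeg _ _ hB'unit
  -- Part (iii)
  have part5 : LinearMap.charpoly (quotMap g.toLinearMap (perp B W))
      = pstar σ (LinearMap.charpoly (restrictMap g.toLinearMap W)) := by
    set P3 := quotForm B W (perp B W) h2 with hP3
    have hdim3 : finrank E ↥W = finrank E (V ⧸ perp B W) := by
      have := Submodule.finrank_quotient_add_finrank (perp B W)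
      omega
    have hl3 : ∀ w : ↥W, (∀ v, P3 w v = 0) → w = 0 := by
      intro w hw
      apply Subtype.ext
      apply h_nondeg
      intro y
      have := hw (Submodule.Quotient.mk y)
      rwa [hP3, quotForm_apply] at this
    have hquotmk : ∀ y : V, quotMap g.toLinearMap (perp B W) (Submodule.Quotient.mk y)
        = Submodule.Quotient.mk (g.toLinearMap y) := by
      intro y
      rw [hquot, Submodule.mapQ_apply]
    have hc3 : ∀ (w : ↥W) (v : V ⧸ perp B W),
        P3 (restrictMap g.toLinearMap W w) (quotMap g.toLinearMap (perp B W) v) = P3 w v := by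
      intro w v
      obtain ⟨y, rfl⟩ := Submodule.Quotient.mk_surjective _ v
      rw [hquotmk, hP3, quotForm_apply, quotForm_apply]
      rw [hres_eq, LinearMap.restrict_coe_apply]
      exact hg (w : V) y
    exact pairing_charpoly σ hσ P3 hdim3 hl3 _ _ hc3
  exact ⟨claim1, part1, ⟨B', hB'mk, hB'herm, hB'nondeg, hB'unit⟩, part4, part5⟩
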